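/- Carry propagation across constant runs: let x and y be naturals whose binary digits are constant on an interval [i, j] of bit positions (i.e., for all i ≤ t ≤ j, bit t of x equals bit i of x, and similarly for y). Then in the addition x + y, the carry out of position j equals the carry out of position i. Formally, with carry_t := ((x mod 2^(t+1)) + (y mod 2^(t+1))) / 2^(t+1), we have carry_j = carry_i. -/

import Mathlib

/-- Decomposition of a mod by `2^(t+1)` into top bit and lower part. -/
lemma mod_pow_succ_decomp (x t : ℕ) :
    x % 2 ^ (t + 1) = x % 2 ^ t + 2 ^ t * (x / 2 ^ t % 2) := by
  rw [pow_succ, Nat.mod_mul]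

lemma digit_div (a b c : ℕ) (ha : a < 2) (hb : b < 2) (hc : c < 2)
    (h0 : a + b = 0 → c = 0) (h2 : a + b = 2 → c = 1) : (a + b + c) / 2 = c := by
  interval_cases a <;> interval_cases b <;> interval_cases c <;> simp_all

/-- Carry recurrence. -/
lemma carry_succ (x y t : ℕ) :
    (x % 2 ^ (t + 1 + 1) + y % 2 ^ (t + 1 + 1)) / 2 ^ (t + 1 + 1)
      = (x / 2 ^ (t + 1) % 2 + y / 2 ^ (t + 1) % 2
          + (x % 2 ^ (t + 1) + y % 2 ^ (t + 1)) / 2 ^ (t + 1)) / 2 := by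
  set m := 2 ^ (t + 1) with hm
  have hmpos : 0 < m := Nat.pow_pos (by norm_num)
  set a := x / m % 2 with ha
  set b := y / m % 2 with hb
  set rx := x % m with hrx
  set ry := y % m with hry
  have h1 : x % 2 ^ (t + 1 + 1) = rx + m * a := mod_pow_succ_decomp x (t + 1)
  have h2 : y % 2 ^ (t + 1 + 1) = ry + m * b := mod_pow_succ_decomp y (t + 1)
  set c := (rx + ry) / m with hc
  set s := (rx + ry) % m with hs
  have hdm : m * c + s = rx + ry := Nat.div_add_mod _ _
  have hslt : s < m := Nat.mod_lt _ hmpos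
  have hnum : x % 2 ^ (t + 1 + 1) + y % 2 ^ (t + 1 + 1) = m * (a + b + c) + s := by
    rw [h1, h2, Nat.mul_add, Nat.mul_add]; omega
  rw [hnum, pow_succ, hm.symm, ← Nat.div_div_eq_div_mul, Nat.mul_add_div hmpos,
    Nat.div_eq_of_lt hslt, Nat.add_zero]

theorem carry_across_constant_run (x y i j : ℕ) (hij : i ≤ j)
    (hx : ∀ t, i ≤ t → t ≤ j → x / 2 ^ t % 2 = x / 2 ^ i % 2)
    (hy : ∀ t, i ≤ t → t ≤ j → y / 2 ^ t % 2 = y / 2 ^ i % 2) :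
    (x % 2 ^ (j + 1) + y % 2 ^ (j + 1)) / 2 ^ (j + 1)
      = (x % 2 ^ (i + 1) + y % 2 ^ (i + 1)) / 2 ^ (i + 1) := by
  have hipos : 0 < (2 : ℕ) ^ i := Nat.pow_pos (by norm_num)
  set ai := x / 2 ^ i % 2 with hai
  set bi := y / 2 ^ i % 2 with hbi
  have hai2 : ai < 2 := Nat.mod_lt _ (by norm_num)
  have hbi2 : bi < 2 := Nat.mod_lt _ (by norm_num)
  set ci := (x % 2 ^ (i + 1) + y % 2 ^ (i + 1)) / 2 ^ (i + 1) with hci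
  have hdec : x % 2 ^ (i + 1) + y % 2 ^ (i + 1)
      = x % 2 ^ i + y % 2 ^ i + 2 ^ i * (ai + bi) := by
    rw [mod_pow_succ_decomp x i, mod_pow_succ_decomp y i]; ring
  have hxlt : x % 2 ^ i < 2 ^ i := Nat.mod_lt _ hipos
  have hylt : y % 2 ^ i < 2 ^ i := Nat.mod_lt _ hipos
  have hci0 : ai + bi = 0 → ci = 0 := by
    intro h
    rw [hci, hdec, h, Nat.mul_zero, Nat.add_zero]
    exact Nat.div_eq_of_lt (by rw [pow_succ]; omega)
  have hci1 : ai + bi = 2 → ci = 1 := by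
    intro h
    rw [hci, hdec, h]
    have : x % 2 ^ i + y % 2 ^ i + 2 ^ i * 2 = 2 ^ (i + 1) * 1 + (x % 2 ^ i + y % 2 ^ i) := by
      rw [pow_succ]; ring
    rw [this, Nat.mul_add_div (Nat.pow_pos (by norm_num)),
      Nat.div_eq_of_lt (by rw [pow_succ]; omega), Nat.add_zero]
  have hcilt : ci < 2 := by
    rw [hci]
    apply Nat.div_lt_of_lt_mul
    have h1 : x % 2 ^ (i + 1) < 2 ^ (i + 1) := Nat.mod_lt _ (Nat.pow_pos (by norm_num))
    have h2 : y % 2 ^ (i + 1) < 2 ^ (i + 1) := Nat.mod_lt _ (Nat.pow_pos (by norm_num))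
    omega
  induction j, hij using Nat.le_induction with
  | base => rfl
  | succ j hij IH =>
    have IH' := IH (fun t h1 h2 => hx t h1 (Nat.le_succ_of_le h2))
      (fun t h1 h2 => hy t h1 (Nat.le_succ_of_le h2))
    have ha : x / 2 ^ (j + 1) % 2 = ai := hx (j + 1) (Nat.le_succ_of_le hij) le_rfl
    have hb : y / 2 ^ (j + 1) % 2 = bi := hy (j + 1) (Nat.le_succ_of_le hij) le_rfl
    rw [carry_succ, ha, hb, IH']
    exact digit_div ai bi ci hai2 hbi2 hcilt hci0 hci1
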